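/- Let d ≥ 1 be an integer and 0 < β ≤ 1 with d < 2(1+β)/β. Then ∫_{ℝ^d} ( ∫_0^1 (4πu)^{−d/2} exp(−‖x‖²/(4u)) du )^{1+β} dx < ∞. -/

import Mathlib

open MeasureTheory
open MeasureTheory Real
open scoped ENNReal NNReal

/-- The Gaussian heat kernel on `ℝ^d`: `p_t(x) = (4πt)^{−d/2} exp(−‖x‖²/(4t))`. -/
noncomputable def heatKer (d : ℕ) (t : ℝ) (x : EuclideanSpace ℝ (Fin d)) : ℝ :=
  (4 * Real.pi * t) ^ (-(d : ℝ) / 2) * Real.exp (-‖x‖ ^ 2 / (4 * t))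

lemma intG (d : ℕ) {b : ℝ} (hb : 0 < b) :
    Integrable (fun v : EuclideanSpace ℝ (Fin d) => Real.exp (-b * ‖v‖^2)) := by
  have h := (GaussianFourier.integrable_cexp_neg_mul_sq_norm_add (V := EuclideanSpace ℝ (Fin d))
      (b := (b:ℂ)) (by simpa using hb) 0 0).norm
  refine h.congr ?_
  filter_upwards with v
  simp
  norm_cast
  exact Real.norm_of_nonneg (Real.exp_nonneg _)

lemma valG (d : ℕ) {b : ℝ} (hb : 0 < b) :
    ∫ v : EuclideanSpace ℝ (Fin d), Real.exp (-b * ‖v‖^2) = (Real.pi/b) ^ ((d:ℝ)/2) := by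
  rw [GaussianFourier.integral_rexp_neg_mul_sq_norm hb]
  simp

lemma heat_nonneg (d : ℕ) {u : ℝ} (hu : 0 < u) (x : EuclideanSpace ℝ (Fin d)) :
    0 ≤ heatKer d u x := by
  unfold heatKer; positivity

lemma lpGauss (d : ℕ) {β u : ℝ} (hβ : 0 < β) (hu : 0 < u) :
    ∫⁻ x : EuclideanSpace ℝ (Fin d), (ENNReal.ofReal (heatKer d u x)) ^ (1+β)
      = ENNReal.ofReal (((4*π)^(-((d:ℝ)*(1+β))/2) * (4*π/(1+β))^((d:ℝ)/2)) * u ^ (-((d:ℝ)*β)/2)) := by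
  have h4u : (0:ℝ) < 4*π*u := by positivity
  have hb : (0:ℝ) < (1+β)/(4*u) := by positivity
  have hpt : ∀ x : EuclideanSpace ℝ (Fin d),
      (ENNReal.ofReal (heatKer d u x)) ^ (1+β)
      = ENNReal.ofReal ((4*π*u)^(-((d:ℝ)*(1+β))/2)) * ENNReal.ofReal (Real.exp (-((1+β)/(4*u)) * ‖x‖^2)) := by
    intro x
    rw [ENNReal.ofReal_rpow_of_nonneg (heat_nonneg d hu x) (by linarith), ← ENNReal.ofReal_mul (by positivity)]
    congr 1
    unfold heatKer
    rw [Real.mul_rpow (by positivity) (Real.exp_nonneg _), ← Real.rpow_mul h4u.le, ← Real.exp_mul]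
    have e1 : (-(d:ℝ)/2) * (1+β) = -((d:ℝ)*(1+β))/2 := by ring
    have e2 : (-‖x‖^2/(4*u)) * (1+β) = -((1+β)/(4*u)) * ‖x‖^2 := by field_simp
    rw [e1, e2]
  simp_rw [hpt]
  rw [lintegral_const_mul _ (by fun_prop), ← ofReal_integral_eq_lintegral_ofReal (intG d hb)
    (Filter.Eventually.of_forall fun x => (Real.exp_nonneg _)), valG d hb, ← ENNReal.ofReal_mul (by positivity)]
  congr 1
  have hπb : π / ((1+β)/(4*u)) = (4*π/(1+β)) * u := by field_simp
  have h1 : (4*π*u) ^ (-((d:ℝ)*(1+β))/2) = (4*π) ^ (-((d:ℝ)*(1+β))/2) * u ^ (-((d:ℝ)*(1+β))/2) := by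
    rw [Real.mul_rpow (by positivity) hu.le]
  have h2 : ((4*π/(1+β)) * u) ^ ((d:ℝ)/2) = (4*π/(1+β)) ^ ((d:ℝ)/2) * u ^ ((d:ℝ)/2) := by
    rw [Real.mul_rpow (by positivity) hu.le]
  rw [hπb, h1, h2]
  have h3 : u ^ (-((d:ℝ)*(1+β))/2) * u ^ ((d:ℝ)/2) = u ^ (-((d:ℝ)*β)/2) := by
    rw [← Real.rpow_add hu]; congr 1; ring
  calc (4*π) ^ (-((d:ℝ)*(1+β))/2) * u ^ (-((d:ℝ)*(1+β))/2) * ((4*π/(1+β)) ^ ((d:ℝ)/2) * u ^ ((d:ℝ)/2))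
      = (4*π) ^ (-((d:ℝ)*(1+β))/2) * (4*π/(1+β)) ^ ((d:ℝ)/2) * (u ^ (-((d:ℝ)*(1+β))/2) * u ^ ((d:ℝ)/2)) := by ring
    _ = _ := by rw [h3]

noncomputable def hkG (d : ℕ) (ε : ℝ) (x : EuclideanSpace ℝ (Fin d)) : ℝ≥0∞ :=
  ∫⁻ u in Set.Ioc ε 1, ENNReal.ofReal (heatKer d u x)

lemma measP (d : ℕ) :
    Measurable (fun p : ℝ × EuclideanSpace ℝ (Fin d) => ENNReal.ofReal (heatKer d p.1 p.2)) := by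
  unfold heatKer; fun_prop

lemma measG (d : ℕ) (ε : ℝ) : Measurable (hkG d ε) := by
  have h : Measurable (Function.uncurry fun (x : EuclideanSpace ℝ (Fin d)) (u : ℝ) =>
      ENNReal.ofReal (heatKer d u x)) := (measP d).comp measurable_swap
  exact h.lintegral_prod_right

lemma unif (d : ℕ) {β : ℝ} (hβ0 : 0 < β) {ε R : ℝ} (hε0 : 0 < ε) (hε1 : ε ≤ 1) :
    ∫⁻ x in Metric.closedBall (0 : EuclideanSpace ℝ (Fin d)) R, hkG d ε x ^ (1+β)
      ≤ (∫⁻ u in Set.Ioc (0:ℝ) 1,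
          ENNReal.ofReal ((((4*π)^(-((d:ℝ)*(1+β))/2) * (4*π/(1+β))^((d:ℝ)/2)) * u ^ (-((d:ℝ)*β)/2)) ^ (1/(1+β)))) ^ (1+β) := by
  have hγ : (0:ℝ) < 1 + β := by linarith
  set C0 : ℝ := (4*π)^(-((d:ℝ)*(1+β))/2) * (4*π/(1+β))^((d:ℝ)/2) with hC0
  have hC0pos : 0 < C0 := by positivity
  set s := Metric.closedBall (0 : EuclideanSpace ℝ (Fin d)) R with hs
  set K := ∫⁻ u in Set.Ioc (0:ℝ) 1, ENNReal.ofReal ((C0 * u ^ (-((d:ℝ)*β)/2)) ^ (1/(1+β))) with hK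
  set J := ∫⁻ x in s, hkG d ε x ^ (1+β) with hJdef
  -- finiteness of J
  have hG_le : ∀ x, hkG d ε x ≤ ENNReal.ofReal ((4*π*ε)^(-(d:ℝ)/2)) := by
    intro x
    calc hkG d ε x ≤ ∫⁻ _u in Set.Ioc ε 1, ENNReal.ofReal ((4*π*ε)^(-(d:ℝ)/2)) := by
          refine setLIntegral_mono measurable_const fun u hu => ?_
          refine ENNReal.ofReal_le_ofReal ?_
          have h4e : (0:ℝ) < 4*π*ε := by positivity
          have hu0 : (0:ℝ) < u := hε0.trans hu.1
          have h1 : heatKer d u x ≤ (4*π*u)^(-(d:ℝ)/2) * 1 := by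
            unfold heatKer
            refine mul_le_mul_of_nonneg_left ?_ (by positivity)
            refine Real.exp_le_one_iff.2 ?_
            have hn : (0:ℝ) ≤ ‖x‖^2 := by positivity
            rw [neg_div]
            simp only [neg_nonpos]
            positivity
          refine h1.trans ?_
          rw [mul_one]
          refine Real.rpow_le_rpow_of_nonpos h4e ?_
            (by have : (0:ℝ) ≤ d := Nat.cast_nonneg d; linarith)
          have : ε ≤ u := hu.1.le
          nlinarith [Real.pi_pos]
      _ = ENNReal.ofReal ((4*π*ε)^(-(d:ℝ)/2)) * volume (Set.Ioc ε 1) := setLIntegral_const _ _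
      _ ≤ ENNReal.ofReal ((4*π*ε)^(-(d:ℝ)/2)) * 1 := by
          gcongr
          rw [Real.volume_Ioc]
          exact ENNReal.ofReal_le_one.2 (by linarith)
      _ = _ := mul_one _
  have hJ_top : J ≠ ⊤ := by
    have : J ≤ (ENNReal.ofReal ((4*π*ε)^(-(d:ℝ)/2)))^(1+β) * volume s := by
      rw [hJdef, ← setLIntegral_const s]
      exact setLIntegral_mono measurable_const fun x _ => ENNReal.rpow_le_rpow (hG_le x) hγ.le
    refine ne_top_of_le_ne_top ?_ this
    exact (ENNReal.mul_lt_top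
      (ENNReal.rpow_lt_top_of_nonneg hγ.le ENNReal.ofReal_ne_top)
      measure_closedBall_lt_top).ne
  have hβne : β ≠ 0 := hβ0.ne'
  have hγne : (1+β) ≠ 0 := hγ.ne'
  have hconj : Real.HolderConjugate (1+β) ((1+β)/β) := by
    constructor
    · rw [inv_one, inv_div, inv_eq_one_div, ← add_div]; exact div_self hγne
    · linarith
    · positivity
  have measPu : ∀ u : ℝ, Measurable fun x : EuclideanSpace ℝ (Fin d) => ENNReal.ofReal (heatKer d u x) :=
    fun u => (measP d).comp (measurable_const.prodMk measurable_id)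
  have measPx : ∀ x : EuclideanSpace ℝ (Fin d), Measurable fun u : ℝ => ENNReal.ofReal (heatKer d u x) :=
    fun x => (measP d).comp (measurable_id.prodMk measurable_const)
  have hchain : J ≤ K * J ^ (β/(1+β)) := by
    have h1q : 1/((1+β)/β) = β/(1+β) := one_div_div _ _
    calc J = ∫⁻ x in s, hkG d ε x * hkG d ε x ^ β := by
          refine lintegral_congr fun x => ?_
          rw [show (1:ℝ)+β = 1+β from rfl, ENNReal.rpow_add_of_nonneg 1 β zero_le_one hβ0.le,
            ENNReal.rpow_one]
      _ = ∫⁻ x in s, ∫⁻ u in Set.Ioc ε 1, ENNReal.ofReal (heatKer d u x) * hkG d ε x ^ β := by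
          refine lintegral_congr fun x => ?_
          exact (lintegral_mul_const _ (measPx x)).symm
      _ = ∫⁻ u in Set.Ioc ε 1, ∫⁻ x in s, ENNReal.ofReal (heatKer d u x) * hkG d ε x ^ β := by
          refine lintegral_lintegral_swap ?_
          apply Measurable.aemeasurable
          exact (((measP d).comp measurable_swap).mul
            (((measG d ε).comp measurable_fst).pow_const _)).comp measurable_id
      _ ≤ ∫⁻ u in Set.Ioc ε 1,
            (∫⁻ x in s, ENNReal.ofReal (heatKer d u x) ^ (1+β)) ^ (1/(1+β)) *
            (∫⁻ x in s, (hkG d ε x ^ β) ^ ((1+β)/β)) ^ (1/((1+β)/β)) := by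
          refine lintegral_mono fun u => ?_
          have := ENNReal.lintegral_mul_le_Lp_mul_Lq (volume.restrict s) hconj
            (measPu u).aemeasurable ((measG d ε).pow_const β).aemeasurable
          simpa [Pi.mul_apply] using this
      _ ≤ ∫⁻ u in Set.Ioc ε 1,
            (∫⁻ x, ENNReal.ofReal (heatKer d u x) ^ (1+β)) ^ (1/(1+β)) * J ^ (β/(1+β)) := by
          refine lintegral_mono fun u => ?_
          rw [← h1q]
          gcongr
          · exact Measure.restrict_le_self
          · refine le_of_eq (lintegral_congr fun x => ?_)
            rw [← ENNReal.rpow_mul]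
            congr 1
            field_simp
      _ ≤ ∫⁻ u in Set.Ioc ε 1,
            ENNReal.ofReal ((C0 * u ^ (-((d:ℝ)*β)/2)) ^ (1/(1+β))) * J ^ (β/(1+β)) := by
          refine le_of_eq (setLIntegral_congr_fun measurableSet_Ioc (fun u hu => ?_))
          rw [lpGauss d hβ0 (hε0.trans hu.1), ENNReal.ofReal_rpow_of_nonneg
            (mul_nonneg hC0pos.le (Real.rpow_nonneg (hε0.trans hu.1).le _)) (one_div_nonneg.2 hγ.le)]
      _ = (∫⁻ u in Set.Ioc ε 1, ENNReal.ofReal ((C0 * u ^ (-((d:ℝ)*β)/2)) ^ (1/(1+β)))) * J ^ (β/(1+β)) :=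
          lintegral_mul_const' _ _ (ENNReal.rpow_ne_top_of_nonneg (div_nonneg hβ0.le hγ.le) hJ_top)
      _ ≤ K * J ^ (β/(1+β)) := by
          gcongr
          exact lintegral_mono_set (Set.Ioc_subset_Ioc_left hε0.le)
  -- algebra
  by_cases hJ0 : J = 0
  · rw [hJ0]; exact zero_le
  have hpow_ne0 : J ^ (β/(1+β)) ≠ 0 := by
    simp [ENNReal.rpow_eq_zero_iff, hJ0, hJ_top]
  have hpow_ne_top : J ^ (β/(1+β)) ≠ ⊤ := ENNReal.rpow_ne_top_of_nonneg (div_nonneg hβ0.le hγ.le) hJ_top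
  have hsplit : J = J ^ (1/(1+β)) * J ^ (β/(1+β)) := by
    rw [← ENNReal.rpow_add_of_nonneg _ _ (one_div_nonneg.2 hγ.le) (div_nonneg hβ0.le hγ.le),
      show 1/(1+β) + β/(1+β) = 1 by field_simp, ENNReal.rpow_one]
  have hkey : J ^ (1/(1+β)) ≤ K := by
    have h2 : J ^ (1/(1+β)) * J ^ (β/(1+β)) ≤ K * J ^ (β/(1+β)) := by
      calc J ^ (1/(1+β)) * J ^ (β/(1+β)) = J := hsplit.symm
        _ ≤ K * J ^ (β/(1+β)) := hchain
    exact (ENNReal.mul_le_mul_iff_left hpow_ne0 hpow_ne_top).1 h2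
  calc J = (J ^ (1/(1+β))) ^ (1+β) := by
        rw [← ENNReal.rpow_mul, one_div_mul_cancel hγne, ENNReal.rpow_one]
    _ ≤ K ^ (1+β) := ENNReal.rpow_le_rpow hkey hγ.le

lemma Kfin (d : ℕ) {β : ℝ} (hβ0 : 0 < β) (hdim : (d:ℝ) < 2 * (1 + β) / β) :
    (∫⁻ u in Set.Ioc (0:ℝ) 1,
      ENNReal.ofReal ((((4*π)^(-((d:ℝ)*(1+β))/2) * (4*π/(1+β))^((d:ℝ)/2)) * u ^ (-((d:ℝ)*β)/2)) ^ (1/(1+β)))) ≠ ⊤ := by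
  have hγ : (0:ℝ) < 1 + β := by linarith
  set C0 : ℝ := (4*π)^(-((d:ℝ)*(1+β))/2) * (4*π/(1+β))^((d:ℝ)/2) with hC0
  have hC0pos : 0 < C0 := by positivity
  set r : ℝ := (-((d:ℝ)*β)/2) * (1/(1+β)) with hrdef
  have hdb : (d:ℝ) * β < 2 * (1 + β) := by
    have h := (lt_div_iff₀ hβ0).1 hdim
    linarith
  have hr : -1 < r := by
    have h1 : r = -((d:ℝ)*β/(2*(1+β))) := by rw [hrdef]; field_simp
    rw [h1, neg_lt, neg_neg]
    rw [div_lt_one (by positivity)]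
    linarith
  -- the integrand equals ofReal (C0^(1/(1+β)) * u ^ r) on the set
  have hcongr : ∫⁻ u in Set.Ioc (0:ℝ) 1, ENNReal.ofReal ((C0 * u ^ (-((d:ℝ)*β)/2)) ^ (1/(1+β)))
      = ∫⁻ u in Set.Ioc (0:ℝ) 1, ENNReal.ofReal (C0 ^ (1/(1+β)) * u ^ r) := by
    refine setLIntegral_congr_fun measurableSet_Ioc (fun u hu => ?_)
    congr 1
    rw [Real.mul_rpow hC0pos.le (Real.rpow_nonneg hu.1.le _),
      ← Real.rpow_mul hu.1.le]
  rw [hcongr]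
  have hInt : IntegrableOn (fun u : ℝ => C0 ^ (1/(1+β)) * u ^ r) (Set.Ioc (0:ℝ) 1) := by
    rw [← intervalIntegrable_iff_integrableOn_Ioc_of_le zero_le_one]
    exact (intervalIntegral.intervalIntegrable_rpow' hr).const_mul _
  have hfi : (∫⁻ u in Set.Ioc (0:ℝ) 1, (‖C0 ^ (1/(1+β)) * u ^ r‖₊ : ℝ≥0∞)) < ⊤ := hInt.2
  refine ne_top_of_le_ne_top hfi.ne (lintegral_mono fun u => ?_)
  exact Real.ofReal_le_enorm _

/-- Finiteness (3.3) for `α = 2`: if `d < 2(1+β)/β` then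
`∫_{ℝ^d} (∫_0^1 p_u(x) du)^{1+β} dx < ∞` for the Gaussian heat kernel. -/
theorem stmt2 (d : ℕ) (hd : 1 ≤ d) (β : ℝ) (hβ0 : 0 < β) (hβ1 : β ≤ 1)
    (hdim : (d : ℝ) < 2 * (1 + β) / β) :
    ∫⁻ x : EuclideanSpace ℝ (Fin d),
      ENNReal.ofReal ((∫ u in (0:ℝ)..1, heatKer d u x) ^ (1 + β)) < ⊤ := by
  have hγ : (0:ℝ) < 1 + β := by linarith
  have hγne : (1:ℝ) + β ≠ 0 := hγ.ne'
  set K := ∫⁻ u in Set.Ioc (0:ℝ) 1,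
      ENNReal.ofReal ((((4*π)^(-((d:ℝ)*(1+β))/2) * (4*π/(1+β))^((d:ℝ)/2)) * u ^ (-((d:ℝ)*β)/2)) ^ (1/(1+β))) with hKdef
  have hKne : K ≠ ⊤ := Kfin d hβ0 hdim
  -- Step A : pointwise bound by (hkG d 0 x) ^ (1+β)
  have stepA : ∀ x : EuclideanSpace ℝ (Fin d),
      ENNReal.ofReal ((∫ u in (0:ℝ)..1, heatKer d u x) ^ (1 + β)) ≤ hkG d 0 x ^ (1+β) := by
    intro x
    set a := ∫ u in (0:ℝ)..1, heatKer d u x with ha_def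
    have ha : 0 ≤ a := by
      rw [ha_def, intervalIntegral.integral_of_le zero_le_one]
      exact setIntegral_nonneg measurableSet_Ioc fun u hu => heat_nonneg d hu.1 x
    rw [← ENNReal.ofReal_rpow_of_nonneg ha hγ.le]
    refine ENNReal.rpow_le_rpow ?_ hγ.le
    calc ENNReal.ofReal a ≤ (‖a‖₊ : ℝ≥0∞) := Real.ofReal_le_enorm a
      _ ≤ ∫⁻ u in Set.Ioc (0:ℝ) 1, (‖heatKer d u x‖₊ : ℝ≥0∞) := by
          rw [ha_def, intervalIntegral.integral_of_le zero_le_one]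
          exact enorm_integral_le_lintegral_enorm _
      _ = hkG d 0 x := by
          refine setLIntegral_congr_fun measurableSet_Ioc (fun u hu => ?_)
          exact Real.enorm_eq_ofReal (heat_nonneg d hu.1 x)
  -- Step B : monotone convergence
  set f : ℕ → EuclideanSpace ℝ (Fin d) → ℝ≥0∞ := fun n x =>
    (Metric.closedBall (0 : EuclideanSpace ℝ (Fin d)) n).indicator
      (fun y => hkG d (1/((n:ℝ)+1)) y ^ (1+β)) x with hfdef
  have hGmono : ∀ {n m : ℕ}, n ≤ m → ∀ x, hkG d (1/((n:ℝ)+1)) x ≤ hkG d (1/((m:ℝ)+1)) x := by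
    intro n m hnm x
    refine lintegral_mono_set (Set.Ioc_subset_Ioc_left ?_)
    refine one_div_le_one_div_of_le (by positivity) ?_
    have : (n:ℝ) ≤ m := Nat.cast_le.2 hnm
    linarith
  have hmono : Monotone f := by
    intro n m hnm x
    rw [hfdef]
    simp only
    refine le_trans (Set.indicator_le_indicator_of_subset
      (Metric.closedBall_subset_closedBall (Nat.cast_le.2 hnm)) (fun y => zero_le) x) ?_
    by_cases hx : x ∈ Metric.closedBall (0 : EuclideanSpace ℝ (Fin d)) (m:ℝ)
    · rw [Set.indicator_of_mem hx, Set.indicator_of_mem hx]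
      exact ENNReal.rpow_le_rpow (hGmono hnm x) hγ.le
    · rw [Set.indicator_of_notMem hx, Set.indicator_of_notMem hx]
  have hmeas : ∀ n, Measurable (f n) :=
    fun n => ((measG d _).pow_const _).indicator measurableSet_closedBall
  have hsup_le : ∀ n, ∫⁻ x, f n x ≤ K ^ (1+β) := by
    intro n
    rw [hfdef]
    simp only
    rw [lintegral_indicator measurableSet_closedBall]
    exact unif d hβ0 (by positivity)
      (by rw [div_le_one (by positivity)]; have : (0:ℝ) ≤ n := Nat.cast_nonneg n; linarith)
  -- pointwise: (hkG d 0 x) ^ (1+β) ≤ ⨆ n, f n x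
  have hpt : ∀ x, hkG d 0 x ^ (1+β) ≤ ⨆ n, f n x := by
    intro x
    set U := ⨆ n, f n x with hU
    rcases eq_or_ne U ⊤ with hUtop | hUtop
    · rw [hUtop]; exact le_top
    obtain ⟨m, hm⟩ := exists_nat_ge ‖x‖
    have hxmem : ∀ n, m ≤ n → x ∈ Metric.closedBall (0 : EuclideanSpace ℝ (Fin d)) (n:ℝ) := by
      intro n hn
      rw [Metric.mem_closedBall, dist_zero_right]
      exact hm.trans (Nat.cast_le.2 hn)
    have hGleU : ∀ n : ℕ, hkG d (1/((n:ℝ)+1)) x ≤ U ^ (1/(1+β)) := by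
      intro n
      have h1 : hkG d (1/((n:ℝ)+1)) x ≤ hkG d (1/(((max n m : ℕ):ℝ)+1)) x :=
        hGmono (le_max_left n m) x
      have h2 : hkG d (1/(((max n m : ℕ):ℝ)+1)) x ^ (1+β) ≤ U := by
        have := le_iSup (fun n => f n x) (max n m)
        rw [hfdef] at this
        simp only at this
        rwa [Set.indicator_of_mem (hxmem _ (le_max_right n m))] at this
      have h3 : (hkG d (1/(((max n m : ℕ):ℝ)+1)) x ^ (1+β)) ^ (1/(1+β)) ≤ U ^ (1/(1+β)) :=
        ENNReal.rpow_le_rpow h2 (one_div_nonneg.2 hγ.le)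
      rw [← ENNReal.rpow_mul, mul_one_div_cancel hγne, ENNReal.rpow_one] at h3
      exact h1.trans h3
    have hsup : hkG d 0 x ≤ U ^ (1/(1+β)) := by
      have hrepr : hkG d 0 x = ⨆ n : ℕ, hkG d (1/((n:ℝ)+1)) x := by
        unfold hkG
        have hmeasn : ∀ n : ℕ, Measurable ((Set.Ioc (1/((n:ℝ)+1)) 1).indicator
            fun u => ENNReal.ofReal (heatKer d u x)) :=
          fun n => ((measP d).comp (measurable_id.prodMk measurable_const)).indicator
            measurableSet_Ioc
        have hmonon : Monotone fun (n:ℕ) => (Set.Ioc (1/((n:ℝ)+1)) 1).indicator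
            (fun u => ENNReal.ofReal (heatKer d u x)) := by
          intro n k hnk u
          refine Set.indicator_le_indicator_of_subset (Set.Ioc_subset_Ioc_left ?_)
            (fun _ => zero_le) u
          refine one_div_le_one_div_of_le (by positivity) ?_
          have : (n:ℝ) ≤ k := Nat.cast_le.2 hnk
          linarith
        have hind : ∀ n : ℕ, (∫⁻ u in Set.Ioc (1/((n:ℝ)+1)) 1, ENNReal.ofReal (heatKer d u x))
            = ∫⁻ u, (Set.Ioc (1/((n:ℝ)+1)) 1).indicator
                (fun u => ENNReal.ofReal (heatKer d u x)) u :=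
          fun n => (lintegral_indicator measurableSet_Ioc _).symm
        simp_rw [hind]
        rw [← lintegral_iSup hmeasn hmonon, ← lintegral_indicator measurableSet_Ioc]
        refine lintegral_congr fun u => ?_
        rcases Classical.em (u ∈ Set.Ioc (0:ℝ) 1) with hu | hu
        · obtain ⟨n, hn⟩ := exists_nat_one_div_lt hu.1
          rw [Set.indicator_of_mem hu]
          refine le_antisymm ?_ (iSup_le fun k => Set.indicator_le_self _ _ u)
          have hmem : u ∈ Set.Ioc (1/((n:ℝ)+1)) 1 := ⟨hn, hu.2⟩
          exact le_trans (le_of_eq (Set.indicator_of_mem hmem (fun u => ENNReal.ofReal (heatKer d u x))).symm) (le_iSup (fun k : ℕ => (Set.Ioc (1/((k:ℝ)+1)) 1).indicator (fun u => ENNReal.ofReal (heatKer d u x)) u) n)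
        · rw [Set.indicator_of_notMem hu]
          refine (le_antisymm (iSup_le fun n => ?_) (zero_le)).symm
          have hnot : u ∉ Set.Ioc (1/((n:ℝ)+1)) 1 :=
            fun hn0 => hu ⟨lt_of_le_of_lt (by positivity) hn0.1, hn0.2⟩
          rw [Set.indicator_of_notMem hnot]
      rw [hrepr]
      exact iSup_le hGleU
    calc hkG d 0 x ^ (1+β) ≤ (U ^ (1/(1+β))) ^ (1+β) := ENNReal.rpow_le_rpow hsup hγ.le
      _ = U := by rw [← ENNReal.rpow_mul, one_div_mul_cancel hγne, ENNReal.rpow_one]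
  -- conclude
  have hfinal : ∫⁻ x : EuclideanSpace ℝ (Fin d),
      ENNReal.ofReal ((∫ u in (0:ℝ)..1, heatKer d u x) ^ (1 + β)) ≤ K ^ (1+β) := by
    calc ∫⁻ x, ENNReal.ofReal ((∫ u in (0:ℝ)..1, heatKer d u x) ^ (1 + β))
        ≤ ∫⁻ x, hkG d 0 x ^ (1+β) := lintegral_mono stepA
      _ ≤ ∫⁻ x, ⨆ n, f n x := lintegral_mono hpt
      _ = ⨆ n, ∫⁻ x, f n x := lintegral_iSup hmeas hmono
      _ ≤ K ^ (1+β) := iSup_le hsup_le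
  exact lt_of_le_of_lt hfinal (ENNReal.rpow_lt_top_of_nonneg hγ.le hKne)
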